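/- There is a constant C > 0 such that for every continuously differentiable function g : ℝ³ → ℂ with g(0) = 0 and g(sω) → 0 as s → ∞ for every ω ∈ S², one has Σ_{k∈ℤ} 2^{k/2} ‖ χ_{{ξ : 2^k ≤ |ξ| < 2^{k+1}}}(ξ) g(ξ)/|ξ| ‖_{L²(ℝ³)} ≤ C Σ_{k∈ℤ} 2^{k/2} ‖ χ_{{ξ : 2^k ≤ |ξ| < 2^{k+1}}}(ξ) (ξ/|ξ|)·∇g(ξ) ‖_{L²(ℝ³)}, i.e. the Hardy-type inequality ‖g(ξ)/|ξ|‖_{\dot B^{1/2}_{2,1}} ≲ ‖∂_r g‖_{\dot B^{1/2}_{2,1}} holds, where ∂_r g(ξ) = (ξ/|ξ|)·∇g(ξ) is the radial derivative. -/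

import Mathlib

open MeasureTheory Set Filter
open Function
open scoped ENNReal Topology

noncomputable section

/-- `ℝ³` as a Euclidean space. -/
abbrev E3 : Type := EuclideanSpace ℝ (Fin 3)

/-- The weighted dyadic norm `Σ_{k∈ℤ} 2^{σk} ‖χ_{2^k ≤ |ξ| < 2^{k+1}} h‖_{L²}`,
valued in `[0,∞]`. -/
noncomputable def dyadicNorm (σ : ℝ) (h : E3 → ℂ) : ℝ≥0∞ :=
  ∑' k : ℤ, ENNReal.ofReal ((2 : ℝ) ^ (σ * (k : ℝ))) *
    eLpNorm ({ξ : E3 | (2 : ℝ) ^ k ≤ ‖ξ‖ ∧ ‖ξ‖ < (2 : ℝ) ^ (k + 1)}.indicator h) 2 volume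

/-- The radial derivative `∂_r g(ξ) = (ξ/|ξ|)·∇g(ξ)`. -/
noncomputable def radialDeriv (g : E3 → ℂ) (ξ : E3) : ℂ :=
  fderiv ℝ g ξ (‖ξ‖⁻¹ • ξ)


/-- dyadic weight -/
def oR (x : ℝ) : ℝ≥0∞ := ENNReal.ofReal ((2:ℝ) ^ x)

lemma oR_mul (x y : ℝ) : oR x * oR y = oR (x + y) := by
  rw [oR, oR, oR, ← ENNReal.ofReal_mul (by positivity), ← Real.rpow_add two_pos]

lemma oR_mono {x y : ℝ} (h : x ≤ y) : oR x ≤ oR y :=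
  ENNReal.ofReal_le_ofReal (Real.rpow_le_rpow_left_iff one_lt_two |>.2 h)

lemma oR_rpow (x y : ℝ) : oR x ^ y = oR (x * y) := by
  rw [oR, oR, ENNReal.ofReal_rpow_of_pos (by positivity), ← Real.rpow_mul (by norm_num)]

lemma oR_neg_one : oR (-1) = 2⁻¹ := by
  rw [oR, show ((2:ℝ) ^ (-1:ℝ)) = 2⁻¹ by
    rw [Real.rpow_neg_one], ENNReal.ofReal_inv_of_pos two_pos, ENNReal.ofReal_ofNat]

lemma oR_one : oR 1 = 2 := by
  rw [oR, Real.rpow_one, ENNReal.ofReal_ofNat]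

lemma oR_nat_neg (m : ℕ) : oR (-(m:ℝ)) = 2⁻¹ ^ m := by
  induction m with
  | zero => simp [oR]
  | succ n ih =>
      rw [pow_succ, ← ih, ← oR_neg_one, oR_mul]
      push_cast
      ring_nf

lemma oR_sum : ∑' m : ℕ, oR (-(m:ℝ)) = 2 := by
  simp only [oR_nat_neg]
  rw [ENNReal.tsum_geometric, ENNReal.one_sub_inv_two, inv_inv]

/-- the annulus -/
def Ann (k : ℤ) : Set E3 := {ξ : E3 | (2:ℝ) ^ k ≤ ‖ξ‖ ∧ ‖ξ‖ < (2:ℝ) ^ (k + 1)}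

lemma Ann_meas (k : ℤ) : MeasurableSet (Ann k) :=
  (measurableSet_le measurable_const measurable_norm).inter
    (measurableSet_lt measurable_norm measurable_const)

lemma eLpNorm_indicator_eq (f : E3 → ℂ) (s : Set E3) :
    eLpNorm (s.indicator f) 2 volume
      = (∫⁻ ξ, s.indicator (fun ξ => ((‖f ξ‖₊ : ℝ≥0∞)) ^ (2:ℝ)) ξ) ^ ((1:ℝ)/2) := by
  rw [eLpNorm_eq_lintegral_rpow_enorm_toReal (by norm_num) (by norm_num)]
  have h2 : (2:ℝ≥0∞).toReal = 2 := by simp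
  rw [h2]
  congr 1
  refine lintegral_congr fun ξ => ?_
  by_cases h : ξ ∈ s
  · simp [Set.indicator_of_mem h]
    rfl
  · simp [Set.indicator_of_notMem h,
      ENNReal.zero_rpow_of_pos (by norm_num : (0:ℝ) < 2)]

lemma ENNReal.rpow_two' (x : ℝ≥0∞) : x ^ (2:ℝ) = x * x := by
  rw [show (2:ℝ) = ((2:ℕ):ℝ) by norm_num, ENNReal.rpow_natCast, sq]

lemma lint_smul (f : E3 → ℝ≥0∞) (hf : Measurable f) {t : ℝ} (ht : t ≠ 0) :
    ∫⁻ ξ, f (t • ξ) = ENNReal.ofReal |(t ^ 3)⁻¹| * ∫⁻ ξ, f ξ := by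
  have h := MeasureTheory.Measure.map_addHaar_smul (volume : Measure E3) ht
  have h3 : Module.finrank ℝ E3 = 3 := by simp
  rw [h3] at h
  rw [← smul_eq_mul, ← lintegral_smul_measure, ← h, lintegral_map hf (measurable_const_smul t)]
lemma minkowski2 {α β : Type*} [MeasurableSpace α] [MeasurableSpace β]
    (μ : Measure α) (ν : Measure β) [SFinite μ] [SFinite ν]
    (F : β → α → ℝ≥0∞) (hF : Measurable (uncurry F)) :
    (∫⁻ x, (∫⁻ t, F t x ∂ν) ^ (2:ℝ) ∂μ) ^ ((1:ℝ)/2)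
      ≤ ∫⁻ t, (∫⁻ x, F t x ^ (2:ℝ) ∂μ) ^ ((1:ℝ)/2) ∂ν := by
  set J : β → ℝ≥0∞ := fun t => (∫⁻ x, F t x ^ (2:ℝ) ∂μ) ^ ((1:ℝ)/2) with hJ
  have hFx : ∀ x, Measurable fun t => F t x := fun x =>
    hF.comp (measurable_id.prodMk measurable_const)
  have hFt : ∀ t, Measurable fun x => F t x := fun t =>
    hF.comp (measurable_const.prodMk measurable_id)
  have hF2 : Measurable (uncurry fun t x => F t x ^ (2:ℝ)) := by
    exact hF.pow_const _
  have hJm : Measurable J := (hF2.lintegral_prod_right (ν := μ)).pow_const _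
  have key : (∫⁻ x, (∫⁻ t, F t x ∂ν) ^ (2:ℝ) ∂μ) ≤ (∫⁻ t, J t ∂ν) ^ (2:ℝ) := by
    have step1 : ∀ x, (∫⁻ t, F t x ∂ν) ^ (2:ℝ) = ∫⁻ t, ∫⁻ s, F t x * F s x ∂ν ∂ν := by
      intro x
      rw [ENNReal.rpow_two']
      rw [← lintegral_mul_const _ (hFx x)]
      refine lintegral_congr fun t => ?_
      rw [← lintegral_const_mul _ (hFx x)]
    calc
      (∫⁻ x, (∫⁻ t, F t x ∂ν) ^ (2:ℝ) ∂μ)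
          = ∫⁻ x, ∫⁻ t, ∫⁻ s, F t x * F s x ∂ν ∂ν ∂μ := lintegral_congr step1
      _ = ∫⁻ t, ∫⁻ x, ∫⁻ s, F t x * F s x ∂ν ∂μ ∂ν := by
          apply lintegral_lintegral_swap
          apply Measurable.aemeasurable
          apply Measurable.lintegral_prod_right
            (f := fun (p : α × β) (s : β) => F p.2 p.1 * F s p.1)
          exact (hF.comp ((measurable_fst.snd).prodMk measurable_fst.fst)).mul
            (hF.comp (measurable_snd.prodMk measurable_fst.fst))
      _ = ∫⁻ t, ∫⁻ s, ∫⁻ x, F t x * F s x ∂μ ∂ν ∂ν := by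
          refine lintegral_congr fun t => ?_
          apply lintegral_lintegral_swap
          exact ((hF.comp (measurable_const.prodMk measurable_fst)).mul
            (hF.comp (measurable_snd.prodMk measurable_fst))).aemeasurable
      _ ≤ ∫⁻ t, ∫⁻ s, J t * J s ∂ν ∂ν := by
          refine lintegral_mono fun t => lintegral_mono fun s => ?_
          have := ENNReal.lintegral_mul_le_Lp_mul_Lq μ
            Real.HolderConjugate.two_two
            (hFt t).aemeasurable (hFt s).aemeasurable
          simpa [hJ, one_div] using this
      _ = (∫⁻ t, J t ∂ν) ^ (2:ℝ) := by
          rw [ENNReal.rpow_two', ← lintegral_mul_const _ hJm]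
          refine lintegral_congr fun t => ?_
          rw [← lintegral_const_mul _ hJm]
  calc (∫⁻ x, (∫⁻ t, F t x ∂ν) ^ (2:ℝ) ∂μ) ^ ((1:ℝ)/2)
      ≤ ((∫⁻ t, J t ∂ν) ^ (2:ℝ)) ^ ((1:ℝ)/2) := ENNReal.rpow_le_rpow key (by norm_num)
    _ = ∫⁻ t, J t ∂ν := by
        rw [← ENNReal.rpow_mul]; norm_num
lemma pointwise_bound {g : E3 → ℂ} (hg : ContDiff ℝ 1 g)
    (hdecay : ∀ ω : E3, ‖ω‖ = 1 → Tendsto (fun s : ℝ => g (s • ω)) atTop (𝓝 0))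
    {ξ : E3} (hξ : ξ ≠ 0) :
    (‖g ξ / (‖ξ‖ : ℂ)‖₊ : ℝ≥0∞) ≤ ∫⁻ t in Ioi (1:ℝ), (‖radialDeriv g (t • ξ)‖₊ : ℝ≥0∞) := by
  set r : ℝ := ‖ξ‖ with hrdef
  have hr : 0 < r := norm_pos_iff.2 hξ
  set ω : E3 := r⁻¹ • ξ with hωdef
  have hω : ‖ω‖ = 1 := by
    rw [hωdef, norm_smul, norm_inv, norm_norm, ← hrdef, inv_mul_cancel₀ hr.ne']
  have hξω : ξ = r • ω := by rw [hωdef, smul_smul, mul_inv_cancel₀ hr.ne', one_smul]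
  set ψ : ℝ → ℂ := fun t => (fderiv ℝ g (t • ξ)) ω with hψdef
  have hψcont : Continuous ψ := by
    have h1 : Continuous fun t : ℝ => fderiv ℝ g (t • ξ) :=
      (hg.continuous_fderiv one_ne_zero).comp (continuous_id.smul continuous_const)
    exact isBoundedBilinearMap_apply.continuous.comp (h1.prodMk continuous_const)
  have hrd : ∀ t : ℝ, 0 < t → radialDeriv g (t • ξ) = ψ t := by
    intro t ht
    have hn : ‖t • ξ‖⁻¹ • (t • ξ) = ω := by
      rw [norm_smul, Real.norm_eq_abs, abs_of_pos ht, smul_smul, hωdef]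
      congr 1
      field_simp
      exact hrdef
    rw [radialDeriv, hn]
  set I := ∫⁻ t in Ioi (1:ℝ), (‖radialDeriv g (t • ξ)‖₊ : ℝ≥0∞) with hIdef
  by_cases hI : I = ∞
  · rw [hI]; exact le_top
  have hIψ : ∫⁻ t in Ioi (1:ℝ), (‖ψ t‖₊ : ℝ≥0∞) = I := by
    refine setLIntegral_congr_fun measurableSet_Ioi (fun t ht => ?_)
    rw [hrd t (lt_trans zero_lt_one ht)]
  have hint : IntegrableOn ψ (Ioi 1) volume := by
    refine ⟨hψcont.aestronglyMeasurable.restrict, ?_⟩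
    rw [hasFiniteIntegral_def]
    simp only [enorm_eq_nnnorm]
    rw [hIψ]
    exact lt_top_iff_ne_top.2 hI
  have hint2 : IntegrableOn (fun t => r • ψ t) (Ioi 1) volume := hint.smul r
  have hderiv : ∀ t : ℝ, HasDerivAt (fun u : ℝ => g (u • ξ)) (r • ψ t) t := by
    intro t
    have hline : HasDerivAt (fun u : ℝ => u • ξ) ξ t := by
      simpa using (hasDerivAt_id t).smul_const ξ
    have hgd : HasFDerivAt g (fderiv ℝ g (t • ξ)) (t • ξ) :=
      ((hg.differentiable one_ne_zero) (t • ξ)).hasFDerivAt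
    have h := hgd.comp_hasDerivAt t hline
    have : (fderiv ℝ g (t • ξ)) ξ = r • ψ t := by
      rw [hψdef, ← ContinuousLinearMap.map_smul, ← hξω]
    rwa [this] at h
  have hFTC : ∀ R : ℝ, 1 ≤ R → ∫ t in (1:ℝ)..R, r • ψ t = g (R • ξ) - g ξ := by
    intro R hR
    have := intervalIntegral.integral_eq_sub_of_hasDerivAt
      (f := fun u : ℝ => g (u • ξ)) (f' := fun t => r • ψ t)
      (fun t _ => hderiv t) ((hψcont.const_smul r).intervalIntegrable 1 R)
    simpa using this
  have hlim1 : Tendsto (fun R => ∫ t in (1:ℝ)..R, r • ψ t) atTop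
      (𝓝 (∫ t in Ioi (1:ℝ), r • ψ t)) :=
    intervalIntegral_tendsto_integral_Ioi 1 hint2 tendsto_id
  have hgR : Tendsto (fun R : ℝ => g (R • ξ)) atTop (𝓝 0) := by
    have h1 : Tendsto (fun R : ℝ => R * r) atTop atTop :=
      Tendsto.atTop_mul_const hr tendsto_id
    have h2 := (hdecay ω hω).comp h1
    have h3 : (fun R : ℝ => g (R • ξ)) = (fun s : ℝ => g (s • ω)) ∘ (fun R => R * r) := by
      funext R
      simp only [comp_apply]
      rw [hξω, smul_smul]
    rwa [h3]
  have hlim2 : Tendsto (fun R : ℝ => ∫ t in (1:ℝ)..R, r • ψ t) atTop (𝓝 (0 - g ξ)) := by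
    have hev : (fun R : ℝ => g (R • ξ) - g ξ) =ᶠ[atTop]
        (fun R : ℝ => ∫ t in (1:ℝ)..R, r • ψ t) :=
      (eventually_ge_atTop 1).mono fun R hR => (hFTC R hR).symm
    exact Tendsto.congr' hev (hgR.sub_const (g ξ))
  have hval : ∫ t in Ioi (1:ℝ), r • ψ t = - g ξ := by
    have h := tendsto_nhds_unique hlim1 hlim2
    rw [h, zero_sub]
  have hnorm : ‖g ξ‖ ≤ r * ∫ t in Ioi (1:ℝ), ‖ψ t‖ := by
    have h1 : ∫ t in Ioi (1:ℝ), r • ψ t = r • ∫ t in Ioi (1:ℝ), ψ t := integral_smul r ψ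
    calc ‖g ξ‖ = ‖∫ t in Ioi (1:ℝ), r • ψ t‖ := by rw [hval, norm_neg]
      _ = r * ‖∫ t in Ioi (1:ℝ), ψ t‖ := by
          rw [h1, norm_smul, Real.norm_eq_abs, abs_of_pos hr]
      _ ≤ r * ∫ t in Ioi (1:ℝ), ‖ψ t‖ :=
          mul_le_mul_of_nonneg_left (norm_integral_le_integral_norm _) hr.le
  have hdivnorm : ‖g ξ / (‖ξ‖ : ℂ)‖ = ‖g ξ‖ / r := by
    rw [norm_div, Complex.norm_real, Real.norm_eq_abs, abs_of_pos hr]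
  calc (‖g ξ / (‖ξ‖ : ℂ)‖₊ : ℝ≥0∞) = ENNReal.ofReal (‖g ξ‖ / r) := by
        rw [← enorm_eq_nnnorm, ← ofReal_norm, hdivnorm]
    _ ≤ ENNReal.ofReal (∫ t in Ioi (1:ℝ), ‖ψ t‖) := by
        apply ENNReal.ofReal_le_ofReal
        rw [div_le_iff₀ hr, mul_comm]
        exact hnorm
    _ = ∫⁻ t in Ioi (1:ℝ), (‖ψ t‖₊ : ℝ≥0∞) :=
        ofReal_integral_norm_eq_lintegral_enorm hint
    _ = I := hIψ

lemma indicator_le_union {α : Type*} {s u v : Set α} (f : α → ℝ≥0∞) (h : s ⊆ u ∪ v) (x : α) :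
    s.indicator f x ≤ u.indicator f x + v.indicator f x := by
  by_cases hx : x ∈ s
  · rw [Set.indicator_of_mem hx]
    rcases h hx with h' | h'
    · rw [Set.indicator_of_mem h']
      exact le_self_add
    · rw [Set.indicator_of_mem h' (f := f)]
      exact le_add_self
  · rw [Set.indicator_of_notMem hx]
    exact zero_le

lemma indicator_rpow_two {α : Type*} (s : Set α) (h : α → ℝ≥0∞) (x : α) :
    s.indicator (fun y => h y ^ (2:ℝ)) x = (s.indicator h x) ^ (2:ℝ) := by
  by_cases hm : x ∈ s
  · rw [Set.indicator_of_mem hm, Set.indicator_of_mem hm]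
  · rw [Set.indicator_of_notMem hm, Set.indicator_of_notMem hm,
      ENNReal.zero_rpow_of_pos (by norm_num : (0:ℝ) < 2)]

lemma meas_rd {g : E3 → ℂ} (hg : ContDiff ℝ 1 g) : Measurable (radialDeriv g) := by
  have h1 : Continuous (fderiv ℝ g) := hg.continuous_fderiv one_ne_zero
  have h2 : Measurable fun ξ : E3 => ‖ξ‖⁻¹ • ξ :=
    (measurable_norm.inv).smul measurable_id
  exact (isBoundedBilinearMap_apply.continuous.measurable).comp (h1.measurable.prodMk h2)

noncomputable def NN (g : E3 → ℂ) (j : ℤ) : ℝ≥0∞ :=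
  eLpNorm ((Ann j).indicator (radialDeriv g)) 2 volume

lemma perk {g : E3 → ℂ} (hg : ContDiff ℝ 1 g)
    (hdecay : ∀ ω : E3, ‖ω‖ = 1 → Tendsto (fun s : ℝ => g (s • ω)) atTop (𝓝 0)) (k : ℤ) :
    eLpNorm ((Ann k).indicator (fun ξ => g ξ / (‖ξ‖ : ℂ))) 2 volume
      ≤ ∑' m : ℕ, oR (-(m:ℝ)/2) * (NN g (k + m) + NN g (k + m + 1)) := by
  have hD : Measurable fun ξ : E3 => (‖radialDeriv g ξ‖₊ : ℝ≥0∞) :=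
    (meas_rd hg).nnnorm.coe_nnreal_ennreal
  set D : E3 → ℝ≥0∞ := fun ξ => (‖radialDeriv g ξ‖₊ : ℝ≥0∞) with hDdef
  set G : ℤ → ℝ≥0∞ := fun j => ∫⁻ ξ, (Ann j).indicator (fun ξ => D ξ ^ (2:ℝ)) ξ with hGdef
  have hNG : ∀ j, NN g j = G j ^ ((1:ℝ)/2) := fun j => eLpNorm_indicator_eq _ _
  set F : ℝ → E3 → ℝ≥0∞ := fun t ξ => (Ann k).indicator (fun _ => (1:ℝ≥0∞)) ξ * D (t • ξ)
    with hFdef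
  have hFmeas : Measurable (uncurry F) := by
    apply Measurable.mul
    · exact (measurable_const.indicator (Ann_meas k)).comp measurable_snd
    · exact hD.comp continuous_smul.measurable
  -- step (i): pointwise bound
  have hpoint : ∀ ξ, (Ann k).indicator (fun ξ => (‖g ξ / (‖ξ‖:ℂ)‖₊ : ℝ≥0∞)) ξ
      ≤ ∫⁻ t in Ioi (1:ℝ), F t ξ := by
    intro ξ
    by_cases h : ξ ∈ Ann k
    · rw [Set.indicator_of_mem h]
      have hξ0 : ξ ≠ 0 := by
        intro h0
        have h1 := h.1
        rw [h0, norm_zero] at h1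
        exact absurd h1 (not_le.2 (zpow_pos (by norm_num) k))
      refine (pointwise_bound hg hdecay hξ0).trans_eq ?_
      refine lintegral_congr fun t => ?_
      simp only [hFdef, Set.indicator_of_mem h, one_mul, hDdef]
    · rw [Set.indicator_of_notMem h]
      exact zero_le
  -- Minkowski step
  have step1 : eLpNorm ((Ann k).indicator (fun ξ => g ξ / (‖ξ‖:ℂ))) 2 volume
      ≤ ∫⁻ t in Ioi (1:ℝ), (∫⁻ ξ, F t ξ ^ (2:ℝ)) ^ ((1:ℝ)/2) := by
    rw [eLpNorm_indicator_eq]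
    refine le_trans ?_ (minkowski2 volume (volume.restrict (Ioi 1)) F hFmeas)
    refine ENNReal.rpow_le_rpow ?_ (by norm_num)
    refine lintegral_mono fun ξ => ?_
    rw [indicator_rpow_two]
    exact ENNReal.rpow_le_rpow (hpoint ξ) (by norm_num)
  -- step (ii): scaling
  set B : ℝ → Set E3 := fun t => {η : E3 | t * (2:ℝ)^k ≤ ‖η‖ ∧ ‖η‖ < t * (2:ℝ)^(k+1)}
    with hBdef
  have hBmeas : ∀ t, MeasurableSet (B t) := fun t =>
    (measurableSet_le measurable_const measurable_norm).inter
      (measurableSet_lt measurable_norm measurable_const)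
  have hscale : ∀ t : ℝ, 0 < t → (∫⁻ ξ, F t ξ ^ (2:ℝ))
      = ENNReal.ofReal |(t^3)⁻¹| * ∫⁻ η, (B t).indicator (fun η => D η ^ (2:ℝ)) η := by
    intro t ht
    have hpt : ∀ ξ, F t ξ ^ (2:ℝ) = (B t).indicator (fun η => D η ^ (2:ℝ)) (t • ξ) := by
      intro ξ
      have hn : ‖t • ξ‖ = t * ‖ξ‖ := by
        rw [norm_smul, Real.norm_eq_abs, abs_of_pos ht]
      have hmem : ξ ∈ Ann k ↔ t • ξ ∈ B t := by
        simp only [Ann, hBdef, Set.mem_setOf_eq, hn]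
        constructor
        · rintro ⟨h1, h2⟩
          exact ⟨mul_le_mul_of_nonneg_left h1 ht.le, (mul_lt_mul_iff_right₀ ht).2 h2⟩
        · rintro ⟨h1, h2⟩
          exact ⟨(mul_le_mul_iff_right₀ ht).1 h1, (mul_lt_mul_iff_right₀ ht).1 h2⟩
      by_cases h : ξ ∈ Ann k
      · rw [Set.indicator_of_mem (hmem.1 h)]
        simp only [hFdef, Set.indicator_of_mem h, one_mul]
      · rw [Set.indicator_of_notMem (fun hc => h (hmem.2 hc))]
        simp only [hFdef, Set.indicator_of_notMem h, zero_mul,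
          ENNReal.zero_rpow_of_pos (by norm_num : (0:ℝ) < 2)]
    rw [lintegral_congr hpt]
    exact lint_smul _ (((hD.pow_const _).indicator (hBmeas t))) ht.ne'
  -- step (iii): annulus cover
  have hcover : ∀ (m : ℕ) (t : ℝ), (2:ℝ)^(m:ℕ) ≤ t → t < (2:ℝ)^(m+1:ℕ) →
      (∫⁻ η, (B t).indicator (fun η => D η ^ (2:ℝ)) η) ≤ G (k+m) + G (k+m+1) := by
    intro m t h1 h2
    have hsub : B t ⊆ Ann (k+m) ∪ Ann (k+m+1) := by
      rintro η ⟨hl, hr⟩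
      have h2k : (0:ℝ) < (2:ℝ)^k := zpow_pos (by norm_num) k
      have hlo : (2:ℝ)^(k+(m:ℤ)) ≤ ‖η‖ := by
        refine le_trans ?_ hl
        rw [zpow_add₀ (by norm_num : (2:ℝ) ≠ 0), mul_comm]
        have : (2:ℝ)^((m:ℤ)) = (2:ℝ)^(m:ℕ) := zpow_natCast 2 m
        rw [this]
        exact mul_le_mul_of_nonneg_right h1 h2k.le
      have hhi : ‖η‖ < (2:ℝ)^(k+(m:ℤ)+2) := by
        refine lt_of_lt_of_le hr ?_
        have h2k1 : (0:ℝ) < (2:ℝ)^(k+1) := zpow_pos (by norm_num) _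
        have : t * (2:ℝ)^(k+1) ≤ (2:ℝ)^(m+1:ℕ) * (2:ℝ)^(k+1) :=
          mul_le_mul_of_nonneg_right h2.le h2k1.le
        refine le_trans this (le_of_eq ?_)
        rw [← zpow_natCast (2:ℝ) (m+1), ← zpow_add₀ (by norm_num : (2:ℝ) ≠ 0)]
        congr 1
        push_cast
        ring
      by_cases hc : ‖η‖ < (2:ℝ)^(k+(m:ℤ)+1)
      · exact Or.inl ⟨hlo, hc⟩
      · refine Or.inr ⟨not_lt.1 hc, ?_⟩
        convert hhi using 2
        ring
    calc (∫⁻ η, (B t).indicator (fun η => D η ^ (2:ℝ)) η)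
        ≤ ∫⁻ η, (Ann (k+m)).indicator (fun η => D η ^ (2:ℝ)) η
            + (Ann (k+m+1)).indicator (fun η => D η ^ (2:ℝ)) η :=
          lintegral_mono (indicator_le_union _ hsub)
      _ = G (k+m) + G (k+m+1) :=
          lintegral_add_left ((hD.pow_const _).indicator (Ann_meas _)) _
  -- step (iv): dyadic decomposition
  have hIoi_sub : Ioi (1:ℝ) ⊆ ⋃ m : ℕ, Ico ((2:ℝ)^(m:ℕ)) ((2:ℝ)^(m+1:ℕ)) := by
    intro t ht
    have ht1 : (1:ℝ) < t := ht
    have hn0 : 0 ≤ Int.log 2 t := by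
      rw [Int.log_of_one_le_right 2 ht1.le]
      exact Int.natCast_nonneg _
    refine Set.mem_iUnion.2 ⟨(Int.log 2 t).toNat, ?_, ?_⟩
    · have h := Int.zpow_log_le_self (b := 2) (r := t) (by norm_num) (lt_trans zero_lt_one ht1)
      rwa [← Int.toNat_of_nonneg hn0, zpow_natCast] at h
    · have h := Int.lt_zpow_succ_log_self (b := 2) (by norm_num) t
      rwa [← Int.toNat_of_nonneg hn0, show ((Int.log 2 t).toNat : ℤ) + 1 = (((Int.log 2 t).toNat + 1 : ℕ) : ℤ) by push_cast; ring, zpow_natCast] at h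
  have step2 : (∫⁻ t in Ioi (1:ℝ), (∫⁻ ξ, F t ξ ^ (2:ℝ)) ^ ((1:ℝ)/2))
      ≤ ∑' m : ℕ, oR (-(m:ℝ)/2) * (NN g (k + m) + NN g (k + m + 1)) := by
    refine le_trans (lintegral_mono_set hIoi_sub) ?_
    refine le_trans (lintegral_iUnion_le _ _) ?_
    refine ENNReal.tsum_le_tsum fun m => ?_
    have hbound : ∀ t ∈ Ico ((2:ℝ)^(m:ℕ)) ((2:ℝ)^(m+1:ℕ)),
        (∫⁻ ξ, F t ξ ^ (2:ℝ)) ^ ((1:ℝ)/2)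
          ≤ oR (-(3*(m:ℝ))/2) * (NN g (k + m) + NN g (k + m + 1)) := by
      rintro t ⟨h1, h2⟩
      have ht0 : (0:ℝ) < t := lt_of_lt_of_le (by positivity) h1
      rw [hscale t ht0]
      have hof : ENNReal.ofReal |(t^3)⁻¹| ≤ oR (-(3*(m:ℝ))) := by
        apply ENNReal.ofReal_le_ofReal
        rw [abs_of_pos (by positivity)]
        have h3 : ((2:ℝ)^(m:ℕ))^3 ≤ t^3 := pow_le_pow_left₀ (by positivity) h1 3
        have heq : (2:ℝ) ^ (-(3*(m:ℝ))) = (((2:ℝ)^(m:ℕ))^3)⁻¹ := by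
          rw [← Real.rpow_natCast 2 m, ← Real.rpow_natCast ((2:ℝ)^((m:ℕ):ℝ)) 3,
            ← Real.rpow_mul (by norm_num), ← Real.rpow_neg (by norm_num)]
          congr 1
          push_cast
          ring
        rw [heq]
        exact inv_anti₀ (by positivity) h3
      calc (ENNReal.ofReal |(t^3)⁻¹| * ∫⁻ η, (B t).indicator (fun η => D η ^ (2:ℝ)) η) ^ ((1:ℝ)/2)
          ≤ (oR (-(3*(m:ℝ))) * (G (k+m) + G (k+m+1))) ^ ((1:ℝ)/2) :=
            ENNReal.rpow_le_rpow (mul_le_mul' hof (hcover m t h1 h2)) (by norm_num)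
        _ = oR (-(3*(m:ℝ))) ^ ((1:ℝ)/2) * (G (k+m) + G (k+m+1)) ^ ((1:ℝ)/2) :=
            ENNReal.mul_rpow_of_nonneg _ _ (by norm_num)
        _ ≤ oR (-(3*(m:ℝ))/2) * (G (k+m) ^ ((1:ℝ)/2) + G (k+m+1) ^ ((1:ℝ)/2)) := by
            rw [oR_rpow]
            refine mul_le_mul' (oR_mono (le_of_eq (by ring))) ?_
            exact ENNReal.rpow_add_le_add_rpow _ _ (by norm_num) (by norm_num)
        _ = oR (-(3*(m:ℝ))/2) * (NN g (k + m) + NN g (k + m + 1)) := by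
            rw [hNG, hNG]
    refine le_trans (setLIntegral_mono ?_ hbound) ?_
    · exact measurable_const
    rw [setLIntegral_const, Real.volume_Ico,
      show (2:ℝ)^(m+1:ℕ) - (2:ℝ)^(m:ℕ) = (2:ℝ)^(m:ℕ) by ring,
      show ENNReal.ofReal ((2:ℝ)^(m:ℕ)) = oR (m:ℝ) by rw [oR, Real.rpow_natCast],
      mul_right_comm, oR_mul]
    refine mul_le_mul' (oR_mono (le_of_eq (by ring))) le_rfl
  exact step1.trans step2

lemma shift_sum (h : ℤ → ℝ≥0∞) (n : ℕ) (c : ℝ) :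
    ∑' k : ℤ, oR ((1/2)*(k:ℝ) + c) * h (k + (n:ℤ))
      = oR (c - (n:ℝ)/2) * ∑' j : ℤ, oR ((1/2)*(j:ℝ)) * h j := by
  have e := (Equiv.subRight (n:ℤ)).tsum_eq
    (f := fun k : ℤ => oR ((1/2)*(k:ℝ) + c) * h (k + (n:ℤ)))
  rw [← e, ← ENNReal.tsum_mul_left]
  refine tsum_congr fun j => ?_
  simp only [Equiv.subRight_apply, sub_add_cancel]
  rw [← mul_assoc, oR_mul]
  congr 2
  push_cast
  ring

theorem stmt12' {g : E3 → ℂ} (hg : ContDiff ℝ 1 g)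
    (hdecay : ∀ ω : E3, ‖ω‖ = 1 → Tendsto (fun s : ℝ => g (s • ω)) atTop (𝓝 0)) :
    (∑' k : ℤ, oR ((1/2)*(k:ℝ)) *
        eLpNorm ((Ann k).indicator (fun ξ => g ξ / (‖ξ‖ : ℂ))) 2 volume)
      ≤ 4 * ∑' j : ℤ, oR ((1/2)*(j:ℝ)) * NN g j := by
  set S := ∑' j : ℤ, oR ((1/2)*(j:ℝ)) * NN g j with hS
  calc (∑' k : ℤ, oR ((1/2)*(k:ℝ)) *
        eLpNorm ((Ann k).indicator (fun ξ => g ξ / (‖ξ‖ : ℂ))) 2 volume)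
      ≤ ∑' k : ℤ, oR ((1/2)*(k:ℝ)) *
          ∑' m : ℕ, oR (-(m:ℝ)/2) * (NN g (k + m) + NN g (k + m + 1)) :=
        ENNReal.tsum_le_tsum fun k => mul_le_mul' le_rfl (perk hg hdecay k)
    _ = ∑' k : ℤ, ∑' m : ℕ, (oR ((1/2)*(k:ℝ) + -(m:ℝ)/2) * NN g (k + m)
          + oR ((1/2)*(k:ℝ) + -(m:ℝ)/2) * NN g (k + m + 1)) := by
        refine tsum_congr fun k => ?_
        rw [← ENNReal.tsum_mul_left]
        refine tsum_congr fun m => ?_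
        rw [← mul_assoc, oR_mul, mul_add]
    _ = ∑' m : ℕ, ∑' k : ℤ, (oR ((1/2)*(k:ℝ) + -(m:ℝ)/2) * NN g (k + m)
          + oR ((1/2)*(k:ℝ) + -(m:ℝ)/2) * NN g (k + m + 1)) := ENNReal.tsum_comm
    _ ≤ ∑' m : ℕ, oR (1 + -(m:ℝ)) * S := by
        refine ENNReal.tsum_le_tsum fun m => ?_
        rw [ENNReal.tsum_add]
        have h1 : (∑' k : ℤ, oR ((1/2)*(k:ℝ) + -(m:ℝ)/2) * NN g (k + m))
            = oR (-(m:ℝ)/2 - (m:ℝ)/2) * S := shift_sum (NN g) m _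
        have h2 : (∑' k : ℤ, oR ((1/2)*(k:ℝ) + -(m:ℝ)/2) * NN g (k + m + 1))
            = oR (-(m:ℝ)/2 - ((m+1:ℕ):ℝ)/2) * S := by
          rw [← shift_sum (NN g) (m+1) (-(m:ℝ)/2)]
          refine tsum_congr fun k => ?_
          congr 2
          push_cast
          ring
        rw [h1, h2]
        have e1 : oR (-(m:ℝ)/2 - (m:ℝ)/2) = oR (-(m:ℝ)) := by congr 1; ring
        have e2 : oR (-(m:ℝ)/2 - ((m+1:ℕ):ℝ)/2) ≤ oR (-(m:ℝ)) := by
          apply oR_mono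
          push_cast
          ring_nf
          linarith
        rw [e1]
        calc oR (-(m:ℝ)) * S + oR (-(m:ℝ)/2 - ((m+1:ℕ):ℝ)/2) * S
            ≤ oR (-(m:ℝ)) * S + oR (-(m:ℝ)) * S := add_le_add le_rfl (mul_le_mul' e2 le_rfl)
          _ = (oR 1 * oR (-(m:ℝ))) * S := by rw [oR_one, two_mul]; ring
          _ = oR (1 + -(m:ℝ)) * S := by rw [oR_mul]
    _ = (∑' m : ℕ, oR (1 + -(m:ℝ))) * S := ENNReal.tsum_mul_right
    _ = 4 * S := by
        have : (∑' m : ℕ, oR (1 + -(m:ℝ))) = 4 := by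
          have : ∀ m : ℕ, oR (1 + -(m:ℝ)) = oR 1 * oR (-(m:ℝ)) := fun m => (oR_mul _ _).symm
          rw [tsum_congr this, ENNReal.tsum_mul_left, oR_sum, oR_one]
          norm_num
        rw [this]

theorem stmt12 :
    ∃ C : ℝ, 0 < C ∧
      ∀ g : E3 → ℂ, ContDiff ℝ 1 g → g 0 = 0 →
        (∀ ω : E3, ‖ω‖ = 1 → Tendsto (fun s : ℝ => g (s • ω)) atTop (𝓝 0)) →
        dyadicNorm (1/2) (fun ξ => g ξ / (‖ξ‖ : ℂ))
          ≤ ENNReal.ofReal C * dyadicNorm (1/2) (radialDeriv g) := by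
  refine ⟨4, by norm_num, fun g hg hg0 hdecay => ?_⟩
  have h1 : dyadicNorm (1/2) (fun ξ => g ξ / (‖ξ‖ : ℂ))
      = ∑' k : ℤ, oR ((1/2)*(k:ℝ)) *
          eLpNorm ((Ann k).indicator (fun ξ => g ξ / (‖ξ‖ : ℂ))) 2 volume := rfl
  have h2 : dyadicNorm (1/2) (radialDeriv g) = ∑' j : ℤ, oR ((1/2)*(j:ℝ)) * NN g j := rfl
  rw [h1, h2, show ENNReal.ofReal (4:ℝ) = 4 from by norm_num]
  exact stmt12' hg hdecay

end
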